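/- Convex clustering is unitarily invariant: if Û is the unique minimizer over n×T real matrices of the convex clustering objective (1/2)‖U − X‖_F² + λ Σ_{i<j} w_{ij} ‖U_{i·} − U_{j·}‖₂ with data X, and Ψ is a T×T orthogonal matrix, then ÛΨ is the unique minimizer of the convex clustering objective (1/2)‖U − XΨ‖_F² + λ Σ_{i<j} w_{ij} ‖U_{i·} − U_{j·}‖₂ with data XΨ and the same weights. In particular, convex clustering of the wavelet coefficients XΨ without a sparsity penalty yields the same clustering solution (up to the transform) as clustering the time-domain data X directly. -/
import Mathlib


open Matrix
open scoped BigOperators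

/-- Frobenius norm squared of a real matrix. -/
noncomputable def frobSq {α β : Type*} [Fintype α] [Fintype β] (A : Matrix α β ℝ) : ℝ :=
  ∑ i, ∑ j, (A i j) ^ 2

/-- Euclidean norm of a real vector. -/
noncomputable def vecNorm {α : Type*} [Fintype α] (v : α → ℝ) : ℝ :=
  Real.sqrt (∑ i, (v i) ^ 2)

/-- The convex clustering objective with data `X`:
`(1/2)‖U − X‖_F² + λ Σ_{i<j} w_{ij} ‖U_{i·} − U_{j·}‖₂`. -/
noncomputable def objCC {n T : ℕ} (lam : ℝ) (w : Fin n → Fin n → ℝ)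
    (X U : Matrix (Fin n) (Fin T) ℝ) : ℝ :=
  (1 / 2) * frobSq (U - X)
    + lam * ∑ i, ∑ j, (if i < j then w i j * vecNorm (fun t => U i t - U j t) else 0)

lemma rowSq_invariant {T : ℕ} (Ψ : Matrix (Fin T) (Fin T) ℝ) (hΨ' : Ψ * Ψᵀ = 1)
    (v : Fin T → ℝ) : ∑ t, (∑ k, v k * Ψ k t) ^ 2 = ∑ t, (v t) ^ 2 := by
  have key : ∀ k l, ∑ t, Ψ k t * Ψ l t = if k = l then (1:ℝ) else 0 := by
    intro k l
    have := congrFun (congrFun hΨ' k) l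
    simpa [Matrix.mul_apply, Matrix.one_apply, Matrix.transpose_apply] using this
  calc ∑ t, (∑ k, v k * Ψ k t) ^ 2
      = ∑ t, ∑ k, ∑ l, (v k * Ψ k t) * (v l * Ψ l t) := by
        simp [sq, Finset.sum_mul_sum]
    _ = ∑ k, ∑ l, (v k * v l) * ∑ t, Ψ k t * Ψ l t := by
        rw [Finset.sum_comm]
        refine Finset.sum_congr rfl fun k _ => ?_
        rw [Finset.sum_comm]
        refine Finset.sum_congr rfl fun l _ => ?_
        rw [Finset.mul_sum]
        refine Finset.sum_congr rfl fun t _ => ?_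
        ring
    _ = ∑ t, (v t) ^ 2 := by
        simp [key, sq]

lemma objCC_invariant {n T : ℕ} (lam : ℝ) (w : Fin n → Fin n → ℝ)
    (X U : Matrix (Fin n) (Fin T) ℝ)
    (Ψ : Matrix (Fin T) (Fin T) ℝ) (hΨ' : Ψ * Ψᵀ = 1) :
    objCC lam w (X * Ψ) (U * Ψ) = objCC lam w X U := by
  unfold objCC
  congr 1
  · congr 1
    unfold frobSq
    refine Finset.sum_congr rfl fun i _ => ?_
    have h : ∀ t, (U * Ψ - X * Ψ) i t = ∑ k, (U - X) i k * Ψ k t := by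
      intro t
      simp [Matrix.sub_apply, Matrix.mul_apply, sub_mul, Finset.sum_sub_distrib]
    calc ∑ t, ((U * Ψ - X * Ψ) i t) ^ 2 = ∑ t, (∑ k, (U - X) i k * Ψ k t) ^ 2 := by
          refine Finset.sum_congr rfl fun t _ => by rw [h t]
      _ = ∑ t, ((U - X) i t) ^ 2 := rowSq_invariant Ψ hΨ' _
  · congr 1
    refine Finset.sum_congr rfl fun i _ => Finset.sum_congr rfl fun j _ => ?_
    by_cases hij : i < j
    · simp only [hij, if_true]
      congr 1
      unfold vecNorm
      congr 1
      have h : ∀ t, (U * Ψ) i t - (U * Ψ) j t = ∑ k, (U i k - U j k) * Ψ k t := by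
        intro t
        simp [Matrix.mul_apply, sub_mul, Finset.sum_sub_distrib]
      calc ∑ t, ((U * Ψ) i t - (U * Ψ) j t) ^ 2
          = ∑ t, (∑ k, (U i k - U j k) * Ψ k t) ^ 2 := by
            refine Finset.sum_congr rfl fun t _ => by rw [h t]
        _ = ∑ t, (U i t - U j t) ^ 2 := rowSq_invariant Ψ hΨ' _
    · simp [hij]

/-- Convex clustering is unitarily invariant: if `Û` is the unique minimizer of the convex
clustering objective with data `X` and `Ψ` is orthogonal, then `ÛΨ` is the unique minimizer
of the convex clustering objective with data `XΨ` and the same weights. -/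
theorem convex_clustering_unitarily_invariant
    {n T : ℕ} (lam : ℝ) (hlam : 0 ≤ lam)
    (w : Fin n → Fin n → ℝ) (hw : ∀ i j, 0 ≤ w i j)
    (X Uhat : Matrix (Fin n) (Fin T) ℝ)
    (Ψ : Matrix (Fin T) (Fin T) ℝ) (hΨ : Ψᵀ * Ψ = 1)
    (hmin : ∀ U, objCC lam w X Uhat ≤ objCC lam w X U)
    (huniq : ∀ U, (∀ V, objCC lam w X U ≤ objCC lam w X V) → U = Uhat) :
    (∀ U, objCC lam w (X * Ψ) (Uhat * Ψ) ≤ objCC lam w (X * Ψ) U)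
    ∧ (∀ U, (∀ V, objCC lam w (X * Ψ) U ≤ objCC lam w (X * Ψ) V) → U = Uhat * Ψ) := by
  have hΨ' : Ψ * Ψᵀ = 1 := mul_eq_one_comm.mp hΨ
  have hrecover : ∀ U : Matrix (Fin n) (Fin T) ℝ, U * Ψᵀ * Ψ = U := by
    intro U; rw [Matrix.mul_assoc, hΨ, Matrix.mul_one]
  constructor
  · intro U
    have h1 : objCC lam w (X * Ψ) (Uhat * Ψ) = objCC lam w X Uhat :=
      objCC_invariant lam w X Uhat Ψ hΨ'
    have h2 : objCC lam w (X * Ψ) U = objCC lam w X (U * Ψᵀ) := by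
      conv_lhs => rw [← hrecover U]
      exact objCC_invariant lam w X (U * Ψᵀ) Ψ hΨ'
    rw [h1, h2]; exact hmin _
  · intro U hUmin
    have hmin' : ∀ V, objCC lam w X (U * Ψᵀ) ≤ objCC lam w X V := by
      intro V
      have h2 : objCC lam w (X * Ψ) U = objCC lam w X (U * Ψᵀ) := by
        conv_lhs => rw [← hrecover U]
        exact objCC_invariant lam w X (U * Ψᵀ) Ψ hΨ'
      have h3 : objCC lam w (X * Ψ) (V * Ψ) = objCC lam w X V :=
        objCC_invariant lam w X V Ψ hΨ'
      rw [← h2, ← h3]; exact hUmin _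
    have := huniq _ hmin'
    calc U = U * Ψᵀ * Ψ := (hrecover U).symm
      _ = Uhat * Ψ := by rw [this]
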